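/- For any standard Young tableau S of shape λ, the recording tableau obtained by applying RSK row insertion to the column reading word of S equals the fixed tableau Q_λ, defined by filling the first column of λ with 1,2,...,λ'_1 from bottom to top, the second column with λ'_1+1,...,λ'_1+λ'_2, and so on (where λ'_i is the length of the i-th column). In particular, this recording tableau depends only on λ, not on S. -/

import Mathlib

namespace RSKPaper

/-- The shape of a tableau: the list of row lengths (rows stored bottom-to-top,
French convention, so the shape is weakly decreasing). -/
def shape (T : List (List ℕ)) : List ℕ := T.map List.length

/-- The conjugate (transpose) of a partition given as a weakly decreasing list. -/
def conj (l : List ℕ) : List ℕ :=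
  (List.range (l.headD 0)).map (fun j => l.countP (fun x => decide (j < x)))

/-- A weakly decreasing list of positive integers. -/
def IsPartitionList (l : List ℕ) : Prop :=
  l.Pairwise (· ≥ ·) ∧ ∀ x ∈ l, 0 < x

/-- A standard Young tableau, rows stored bottom-to-top (French convention):
partition shape, rows strictly increasing, columns strictly increasing upwards,
and the entries are exactly 1,...,n. -/
def IsSYT (T : List (List ℕ)) : Prop :=
  IsPartitionList (shape T) ∧
  (∀ r ∈ T, r.Pairwise (· < ·)) ∧
  (∀ i j, i + 1 < T.length → j < (T.getD (i+1) []).length →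
    (T.getD i []).getD j 0 < (T.getD (i+1) []).getD j 0) ∧
  T.flatten.Perm (List.range' 1 T.flatten.length)

/-- Schensted row insertion of a single letter into a tableau. -/
def insertTab : List (List ℕ) → ℕ → List (List ℕ)
  | [], a => [[a]]
  | r :: rs, a =>
    match r.findIdx? (fun b => decide (a < b)) with
    | none => (r ++ [a]) :: rs
    | some i => (r.set i a) :: insertTab rs (r.getD i 0)

/-- The insertion tableau of a word. -/
def insertWord (w : List ℕ) : List (List ℕ) := w.foldl insertTab []

/-- The index of the row where the shape grew. -/
def growthRow (P P' : List (List ℕ)) : ℕ :=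
  (List.range P'.length).findIdx
    (fun i => decide ((P.getD i []).length ≠ (P'.getD i []).length))

/-- Add a box labelled `k` at the end of row `r` of the recording tableau. -/
def addBox (Q : List (List ℕ)) (r k : ℕ) : List (List ℕ) :=
  if r < Q.length then Q.set r (Q.getD r [] ++ [k]) else Q ++ [[k]]

def RSKaux : List ℕ → ℕ → List (List ℕ) × List (List ℕ) → List (List ℕ) × List (List ℕ)
  | [], _, pq => pq
  | a :: rest, k, (P, Q) =>
      let P' := insertTab P a
      RSKaux rest (k+1) (P', addBox Q (growthRow P P') k)

/-- The RSK correspondence: insertion and recording tableaux of a word. -/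
def RSK (w : List ℕ) : List (List ℕ) × List (List ℕ) := RSKaux w 1 ([], [])

/-- Row reading word: rows top to bottom, left to right. -/
def readingWord (T : List (List ℕ)) : List ℕ := T.reverse.flatten

/-- Column reading word: columns left to right, each read top to bottom. -/
def columnWord (T : List (List ℕ)) : List ℕ :=
  (List.range (T.headD []).length).flatMap
    (fun j => T.reverse.filterMap (fun row => row[j]?))

/-- Transpose of a tableau: column `j` (bottom to top) becomes row `j`. -/
def transposeTab (T : List (List ℕ)) : List (List ℕ) :=
  (List.range (T.headD []).length).map
    (fun j => T.filterMap (fun row => row[j]?))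

/-- The inverse of a permutation written as a word on 1,...,n. -/
def invWord (w : List ℕ) : List ℕ :=
  (List.range w.length).map (fun i => w.findIdx (fun x => decide (x = i+1)) + 1)

/-- Convert a list of columns (each bottom-to-top) into a list of `k` rows. -/
def rowsOfCols (cols : List (List ℕ)) (k : ℕ) : List (List ℕ) :=
  (List.range k).map (fun i => cols.filterMap (fun c => getElem? c i))

/-- The columns of the tableau `T_λ`: process the rows of `λ` from shortest to
longest; at each stage drop the next consecutive integers into the bottommost
empty cells of the first `λ_{k-t+1}` columns, left to right. -/
def colsOfT (l : List ℕ) : List (List ℕ) :=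
  (l.reverse.foldl
    (fun (st : List (List ℕ) × ℕ) len =>
      (st.1.mapIdx (fun j col => if j < len then col ++ [st.2 + j] else col), st.2 + len))
    ((List.replicate (l.headD 0) ([] : List ℕ)), 1)).1

/-- The tableau `T_λ` of Lemma 3.3. -/
def Tlam (l : List ℕ) : List (List ℕ) := rowsOfCols (colsOfT l) l.length

/-- The tableau `Q_λ`: columns filled consecutively with `1,…,n` from bottom to
top, left column first. -/
def Qlam (l : List ℕ) : List (List ℕ) :=
  rowsOfCols
    ((List.range (conj l).length).map (fun j =>
      (List.range ((conj l).getD j 0)).map (fun i => ((conj l).take j).sum + i + 1)))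
    l.length

/-- The map `f`: row reading word of the recording tableau. -/
def f (w : List ℕ) : List ℕ := readingWord (RSK w).2

/-- The map `c`: column reading word of the recording tableau. -/
def c (w : List ℕ) : List ℕ := columnWord (RSK w).2

/-- The map `r`: reversed row reading word of the recording tableau. -/
def r (w : List ℕ) : List ℕ := (readingWord (RSK w).2).reverse

/-- `s` is `k`-increasing: it contains no decreasing subsequence of length `k+1`. -/
def IsKIncreasing (k : ℕ) (s : List ℕ) : Prop :=
  ∀ d : List ℕ, d.Sublist s → d.Pairwise (· > ·) → d.length ≤ k

/-- `s` is `k`-decreasing: it contains no increasing subsequence of length `k+1`. -/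
def IsKDecreasing (k : ℕ) (s : List ℕ) : Prop :=
  ∀ d : List ℕ, d.Sublist s → d.Pairwise (· < ·) → d.length ≤ k

/-- `I_k(w)`: the maximum length of a `k`-increasing subsequence of `w`. -/
noncomputable def Ik (k : ℕ) (w : List ℕ) : ℕ :=
  sSup {m | ∃ s : List ℕ, s.Sublist w ∧ IsKIncreasing k s ∧ s.length = m}

/-- `D_k(w)`: the maximum length of a `k`-decreasing subsequence of `w`. -/
noncomputable def Dk (k : ℕ) (w : List ℕ) : ℕ :=
  sSup {m | ∃ s : List ℕ, s.Sublist w ∧ IsKDecreasing k s ∧ s.length = m}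

end RSKPaper


namespace RSKAux
open RSKPaper

/-- Rows of a list of columns, with trailing rows up to first column's height. -/
def stackRows (cs : List (List ℕ)) : List (List ℕ) :=
  rowsOfCols cs (cs.headD []).length

/-- Append entries of `d` to the ends of the first rows of `B`. -/
def glue : List (List ℕ) → List ℕ → List (List ℕ)
  | B, [] => B
  | [], v :: d => [v] :: glue [] d
  | r :: B, v :: d => (r ++ [v]) :: glue B d

@[simp] lemma glue_nil (B : List (List ℕ)) : glue B [] = B := by cases B <;> rfl

@[simp] lemma glue_cons_cons (r : List ℕ) (B : List (List ℕ)) (v : ℕ) (d : List ℕ) :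
    glue (r :: B) (v :: d) = (r ++ [v]) :: glue B d := rfl

@[simp] lemma glue_nil_cons (v : ℕ) (d : List ℕ) :
    glue [] (v :: d) = [v] :: glue [] d := rfl

lemma glue_length (B : List (List ℕ)) (d : List ℕ) :
    (glue B d).length = max B.length d.length := by
  induction d generalizing B with
  | nil => simp
  | cons v d ih =>
    cases B with
    | nil => simp [glue, ih]
    | cons r B => simp [glue, ih]

lemma glue_getD (B : List (List ℕ)) (d : List ℕ) (i : ℕ) :
    (glue B d).getD i [] = B.getD i [] ++ (d[i]?).toList := by
  induction d generalizing B i with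
  | nil => simp
  | cons v d ih =>
    cases B with
    | nil =>
      cases i with
      | zero => simp [glue]
      | succ i => simpa [glue] using ih [] i
    | cons r B =>
      cases i with
      | zero => simp [glue]
      | succ i => simpa [glue] using ih B i

lemma findIdx?_append_singleton (r : List ℕ) (v a : ℕ)
    (h : ∀ x ∈ r, ¬ (a < x)) (hv : a < v) :
    (r ++ [v]).findIdx? (fun b => decide (a < b)) = some r.length := by
  rw [List.findIdx?_append, List.findIdx?_eq_none_iff.mpr (by simpa using h)]
  simp [List.findIdx?_cons, hv]

lemma set_append_singleton (r : List ℕ) (v a : ℕ) :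
    (r ++ [v]).set r.length a = r ++ [a] := by
  induction r with
  | nil => rfl
  | cons x r ih => simp [List.set, ih]

lemma getD_append_singleton (r : List ℕ) (v : ℕ) :
    (r ++ [v]).getD r.length 0 = v := by
  induction r with
  | nil => rfl
  | cons x r ih => simpa using ih

lemma insert_cascade (d : List ℕ) : ∀ (B : List (List ℕ)) (a : ℕ),
    ((a :: d).Pairwise (· < ·)) →
    (∀ i, i ≤ d.length → ∀ x ∈ B.getD i [], x < (a :: d).getD i 0) →
    insertTab (glue B d) a = glue B (a :: d) := by
  induction d with
  | nil =>
    intro B a _ hdom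
    cases B with
    | nil => rfl
    | cons r B =>
      have hr : ∀ x ∈ r, ¬ (a < x) := fun x hx =>
        not_lt_of_gt (hdom 0 (by simp) x hx)
      simp only [glue_nil, insertTab]
      rw [List.findIdx?_eq_none_iff.mpr (by simpa using hr)]
      rw [show glue (r :: B) [a] = (r ++ [a]) :: B by rw [glue_cons_cons, glue_nil]]
  | cons v d ih =>
    intro B a hchain hdom
    have hav : a < v := (List.pairwise_cons.mp hchain).1 v (by simp)
    have hchain' : (v :: d).Pairwise (· < ·) := (List.pairwise_cons.mp hchain).2
    cases B with
    | nil =>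
      show insertTab ([v] :: glue [] d) a = _
      simp only [insertTab]
      rw [show ([v].findIdx? (fun b => decide (a < b))) = some 0 by
        simp [List.findIdx?_cons, hav]]
      have := ih [] v hchain' (by intro i _ x hx; simp at hx)
      simp only [List.set, List.getD]
      show [a] :: insertTab (glue [] d) v = _
      rw [this]
      simp only [glue_nil_cons]
    | cons r B =>
      show insertTab ((r ++ [v]) :: glue B d) a = _
      have hr : ∀ x ∈ r, ¬ (a < x) := fun x hx =>
        not_lt_of_gt (hdom 0 (by simp) x hx)
      simp only [insertTab]
      rw [findIdx?_append_singleton r v a hr hav]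
      simp only [set_append_singleton, getD_append_singleton]
      have hdom' : ∀ i, i ≤ d.length → ∀ x ∈ B.getD i [], x < (v :: d).getD i 0 := by
        intro i hi x hx
        exact hdom (i+1) (by simpa using hi) x hx
      rw [ih B v hchain' hdom', glue_cons_cons]

lemma growthRow_glue (B : List (List ℕ)) (d : List ℕ) (a : ℕ) :
    growthRow (glue B d) (glue B (a :: d)) = d.length := by
  unfold growthRow
  have hlen : d.length < (glue B (a :: d)).length := by
    rw [glue_length]; simp only [List.length_cons]; omega
  have hrange : d.length < (List.range (glue B (a :: d)).length).length := by
    simpa using hlen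
  rw [List.findIdx_eq hrange]
  constructor
  · simp only [List.getElem_range, decide_eq_true_eq]
    rw [glue_getD, glue_getD]
    have h1 : d[d.length]? = none := by simp
    obtain ⟨y, hy⟩ : ∃ y, (a :: d)[d.length]? = some y :=
      ⟨_, List.getElem?_eq_getElem (by simp)⟩
    rw [h1, hy]
    simp
  · intro j hj
    simp only [List.getElem_range, decide_eq_false_iff_not, not_not]
    have h1 : d[j]? = some d[j] := List.getElem?_eq_getElem hj
    obtain ⟨y, hy⟩ : ∃ y, (a :: d)[j]? = some y :=
      ⟨_, List.getElem?_eq_getElem (by simp; omega)⟩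
    rw [glue_getD, glue_getD, h1, hy]
    simp

lemma eq_of_getD (l l' : List (List ℕ)) (hl : l.length = l'.length)
    (h : ∀ i < l.length, l.getD i [] = l'.getD i []) : l = l' := by
  apply List.ext_getElem hl
  intro i h1 h2
  have := h i h1
  rwa [List.getD_eq_getElem _ _ h1, List.getD_eq_getElem _ _ h2] at this

lemma addBox_glue (B : List (List ℕ)) (q : List ℕ) (k : ℕ) :
    addBox (glue B q) q.length k = glue B (q ++ [k]) := by
  unfold addBox
  by_cases h : q.length < B.length
  · rw [if_pos (by rw [glue_length]; omega)]
    apply eq_of_getD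
    · simp only [List.length_set, glue_length, List.length_append, List.length_singleton]; omega
    · intro i hi
      rw [List.length_set, glue_length] at hi
      have hi1 : i < (glue B q).length := by rw [glue_length]; omega
      have hi2 : i < ((glue B q).set q.length ((glue B q).getD q.length [] ++ [k])).length := by
        simpa [List.length_set] using hi1
      rw [List.getD_eq_getElem _ _ hi2, List.getElem_set]
      by_cases hiq : q.length = i
      · rw [if_pos hiq]
        subst hiq
        rw [glue_getD, glue_getD]
        have hk : (q ++ [k])[q.length]? = some k := by
          rw [List.getElem?_append_right (le_refl _)]; simp
        simp [hk]
      · rw [if_neg hiq, ← List.getD_eq_getElem _ _ hi1, glue_getD, glue_getD]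
        congr 1
        by_cases hlt : i < q.length
        · rw [List.getElem?_append_left hlt]
        · have e1 : q[i]? = none := List.getElem?_eq_none (by omega)
          have e2 : (q ++ [k])[i]? = none := by
            apply List.getElem?_eq_none; simp; omega
          rw [e1, e2]
  · rw [if_neg (by rw [glue_length]; omega)]
    apply eq_of_getD
    · simp only [List.length_append, glue_length, List.length_singleton]; omega
    · intro i hi
      simp only [List.length_append, glue_length, List.length_singleton] at hi
      by_cases hlt : i < (glue B q).length
      · rw [List.getD_append _ _ _ _ hlt, glue_getD, glue_getD]
        congr 1
        rw [glue_length] at hlt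
        have hq : i < q.length := by omega
        rw [List.getElem?_append_left hq]
      · rw [glue_length] at hlt
        have hiq : i = q.length := by omega
        subst hiq
        rw [List.getD_append_right _ _ _ _ (by rw [glue_length]; omega)]
        have hz : q.length - (glue B q).length = 0 := by rw [glue_length]; omega
        rw [hz, glue_getD]
        have hB : B[q.length]? = none := List.getElem?_eq_none (by omega)
        have hk : (q ++ [k])[q.length]? = some k := by
          rw [List.getElem?_append_right (le_refl _)]; simp
        simp [hB, hk]

lemma rowsOfCols_length (cs : List (List ℕ)) (k : ℕ) : (rowsOfCols cs k).length = k := by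
  simp [rowsOfCols]

lemma rowsOfCols_getD (cs : List (List ℕ)) (k i : ℕ) (h : i < k) :
    (rowsOfCols cs k).getD i [] = cs.filterMap (fun c => getElem? c i) := by
  rw [List.getD_eq_getElem _ _ (by simpa [rowsOfCols_length])]
  simp [rowsOfCols]

lemma filterMap_singleton (f : List ℕ → Option ℕ) (x : List ℕ) :
    List.filterMap f [x] = (f x).toList := by
  cases h : f x <;> simp [List.filterMap_cons, h]

lemma stackRows_append (C : List (List ℕ)) (d : List ℕ)
    (h : C = [] ∨ d.length ≤ (C.headD []).length) :
    stackRows (C ++ [d]) = glue (stackRows C) d := by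
  cases C with
  | nil =>
    apply eq_of_getD
    · simp [stackRows, rowsOfCols_length, glue_length, rowsOfCols]
    · intro i hi
      have hi' : i < d.length := by
        simpa [stackRows, rowsOfCols_length] using hi
      rw [show ([] ++ [d] : List (List ℕ)) = [d] by simp]
      rw [show stackRows [d] = rowsOfCols [d] d.length from rfl]
      rw [rowsOfCols_getD _ _ _ hi', filterMap_singleton, glue_getD]
      have : stackRows [] = [] := rfl
      rw [this]
      simp
  | cons c0 C' =>
    have hd : d.length ≤ c0.length := by simpa using h
    have h1 : stackRows ((c0 :: C') ++ [d]) = rowsOfCols ((c0 :: C') ++ [d]) c0.length := rfl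
    have h2 : stackRows (c0 :: C') = rowsOfCols (c0 :: C') c0.length := rfl
    apply eq_of_getD
    · rw [h1, h2, rowsOfCols_length, glue_length, rowsOfCols_length]
      omega
    · intro i hi
      rw [h1, rowsOfCols_length] at hi
      rw [h1, h2, rowsOfCols_getD _ _ _ hi, glue_getD, rowsOfCols_getD _ _ _ hi,
        List.filterMap_append, filterMap_singleton]

lemma inner (w : List ℕ) : ∀ (d q : List ℕ) (n : ℕ) (B BQ : List (List ℕ)) (rest : List ℕ),
    ((w.reverse ++ d).Pairwise (· < ·)) →
    (∀ i, i < (w.reverse ++ d).length → ∀ x ∈ B.getD i [], x < (w.reverse ++ d).getD i 0) →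
    q.length = d.length →
    RSKaux (w ++ rest) n (glue B d, glue BQ q) =
      RSKaux rest (n + w.length) (glue B (w.reverse ++ d), glue BQ (q ++ List.range' n w.length)) := by
  induction w with
  | nil => intro d q n B BQ rest _ _ _; simp
  | cons a w ih =>
    intro d q n B BQ rest hchain hdom hq
    have hwd : (a :: w).reverse ++ d = w.reverse ++ (a :: d) := by simp
    have hsub : (a :: d).Sublist ((a :: w).reverse ++ d) := by
      rw [hwd]; exact List.sublist_append_right _ _
    have hchain' : (a :: d).Pairwise (· < ·) := hchain.sublist hsub
    have hdomc : ∀ i, i ≤ d.length → ∀ x ∈ B.getD i [], x < (a :: d).getD i 0 := by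
      intro i hi x hx
      have hilen : i < ((a :: w).reverse ++ d).length := by simp; omega
      have h1 : x < ((a :: w).reverse ++ d).getD i 0 := hdom i hilen x hx
      have h2 : ((a :: w).reverse ++ d).getD i 0 ≤ (a :: d).getD i 0 := by
        have he : ((a :: w).reverse ++ d).getD (w.length + i) 0 = (a :: d).getD i 0 := by
          rw [hwd, List.getD_append_right _ _ _ _ (by simp)]
          congr 1
          simp
        rcases Nat.eq_zero_or_pos w.length with hw | hw
        · rw [← he, hw, Nat.zero_add]
        · have hlt : ((a :: w).reverse ++ d).getD i 0 <
              ((a :: w).reverse ++ d).getD (w.length + i) 0 := by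
            have hp := List.pairwise_iff_getElem.mp hchain
            have hi1 : i < ((a :: w).reverse ++ d).length := hilen
            have hi2 : w.length + i < ((a :: w).reverse ++ d).length := by simp; omega
            have := hp i (w.length + i) hi1 hi2 (by omega)
            rwa [List.getD_eq_getElem _ _ hi1, List.getD_eq_getElem _ _ hi2]
          rw [← he]
          exact le_of_lt hlt
      exact lt_of_lt_of_le h1 h2
    have hins : insertTab (glue B d) a = glue B (a :: d) :=
      insert_cascade d B a hchain' hdomc
    have hgrow := growthRow_glue B d a
    show RSKaux (a :: (w ++ rest)) n (glue B d, glue BQ q) = _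
    rw [show RSKaux (a :: (w ++ rest)) n (glue B d, glue BQ q) =
        RSKaux (w ++ rest) (n + 1)
          (insertTab (glue B d) a,
           addBox (glue BQ q) (growthRow (glue B d) (insertTab (glue B d) a)) n) from rfl]
    rw [hins, hgrow, ← hq, addBox_glue BQ q n]
    have hch2 : (w.reverse ++ (a :: d)).Pairwise (· < ·) := by rw [← hwd]; exact hchain
    have hdom2 : ∀ i, i < (w.reverse ++ (a :: d)).length →
        ∀ x ∈ B.getD i [], x < (w.reverse ++ (a :: d)).getD i 0 := by
      rw [← hwd]; exact hdom
    have hq2 : (q ++ [n]).length = (a :: d).length := by simp [hq]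
    rw [ih (a :: d) (q ++ [n]) (n + 1) B BQ rest hch2 hdom2 hq2]
    rw [hwd]
    simp only [List.length_cons]
    rw [show (n + 1) + w.length = n + (w.length + 1) by omega,
        List.append_assoc, List.range'_succ]
    rfl


/-- Recording columns: successive blocks of consecutive labels. -/
def qAppend : ℕ → List (List ℕ) → List (List ℕ)
  | _, [] => []
  | n, c :: ts => List.range' n c.length :: qAppend (n + c.length) ts

/-- Relation between columns of an SYT, left to right. -/
def Rcol (c1 c2 : List ℕ) : Prop :=
  c2.length ≤ c1.length ∧ ∀ i < c2.length, c1.getD i 0 < c2.getD i 0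

lemma outer (todo : List (List ℕ)) : ∀ (done qdone : List (List ℕ)) (n : ℕ),
    (∀ c ∈ done ++ todo, c.Pairwise (· < ·)) →
    List.Pairwise Rcol (done ++ todo) →
    qdone.map List.length = done.map List.length →
    RSKaux (todo.flatMap List.reverse) n (stackRows done, stackRows qdone) =
      (stackRows (done ++ todo), stackRows (qdone ++ qAppend n todo)) := by
  induction todo with
  | nil =>
    intro done qdone n _ _ _
    show (stackRows done, stackRows qdone) = _
    simp [qAppend]
  | cons c ts ih =>
    intro done qdone n hsort hpair hqlen
    have hRdc : ∀ col ∈ done, Rcol col c := by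
      intro col hcol
      exact (List.pairwise_append.mp hpair).2.2 col hcol c (by simp)
    have hflat : (c :: ts).flatMap List.reverse = c.reverse ++ ts.flatMap List.reverse := by
      simp
    have hrev : c.reverse.reverse ++ ([] : List ℕ) = c := by simp
    have hchain : (c.reverse.reverse ++ ([] : List ℕ)).Pairwise (· < ·) := by
      rw [hrev]; exact hsort c (by simp)
    have hdom : ∀ i, i < (c.reverse.reverse ++ ([] : List ℕ)).length →
        ∀ x ∈ (stackRows done).getD i [], x < (c.reverse.reverse ++ ([] : List ℕ)).getD i 0 := by
      intro i hi x hx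
      rw [hrev] at hi ⊢
      by_cases hik : i < (done.headD []).length
      · rw [show stackRows done = rowsOfCols done (done.headD []).length from rfl,
          rowsOfCols_getD _ _ _ hik] at hx
        obtain ⟨col, hcol, hget⟩ := List.mem_filterMap.mp hx
        obtain ⟨hlt, hval⟩ := List.getElem?_eq_some_iff.mp hget
        have := (hRdc col hcol).2 i hi
        rw [List.getD_eq_getElem _ _ hlt] at this
        rwa [hval] at this
      · exfalso
        have : (stackRows done).getD i [] = [] := by
          apply List.getD_eq_default
          rw [show stackRows done = rowsOfCols done (done.headD []).length from rfl,
            rowsOfCols_length]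
          omega
        rw [this] at hx
        simp at hx
    have hinner := inner c.reverse [] [] n (stackRows done) (stackRows qdone)
      (ts.flatMap List.reverse) hchain hdom rfl
    simp only [glue_nil, List.nil_append, List.length_reverse, hrev] at hinner
    have hb1 : stackRows (done ++ [c]) = glue (stackRows done) c := by
      apply stackRows_append
      cases done with
      | nil => left; rfl
      | cons d0 D =>
        right
        exact (hRdc d0 (by simp)).1
    have hqhead : (qdone.headD []).length = (done.headD []).length := by
      have h1 := congrArg (fun l => l.headD 0) hqlen
      cases qdone <;> cases done <;> simp_all
    have hb2 : stackRows (qdone ++ [List.range' n c.length]) =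
        glue (stackRows qdone) (List.range' n c.length) := by
      apply stackRows_append
      cases done with
      | nil =>
        left
        have : qdone.map List.length = [] := by rw [hqlen]; rfl
        exact List.map_eq_nil_iff.mp this
      | cons d0 D =>
        right
        rw [List.length_range', hqhead]
        exact (hRdc d0 (by simp)).1
    have hsort' : ∀ x ∈ (done ++ [c]) ++ ts, x.Pairwise (· < ·) := by
      intro x hx
      apply hsort
      simpa [List.append_assoc] using hx
    have hpair' : List.Pairwise Rcol ((done ++ [c]) ++ ts) := by
      simpa only [List.append_assoc, List.singleton_append] using hpair
    have hqlen' : (qdone ++ [List.range' n c.length]).map List.length =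
        (done ++ [c]).map List.length := by
      simp [hqlen]
    have hih := ih (done ++ [c]) (qdone ++ [List.range' n c.length]) (n + c.length)
      hsort' hpair' hqlen'
    rw [hflat, hinner, ← hb1, ← hb2, hih]
    simp only [List.append_assoc, List.singleton_append]
    rfl


lemma filterMap_get_sorted (S : List (List ℕ)) (hs : (S.map List.length).Pairwise (· ≥ ·)) (j : ℕ) :
    S.filterMap (fun r => r[j]?) =
      (S.take ((S.map List.length).countP (fun x => decide (j < x)))).map (fun r => r.getD j 0) := by
  induction S with
  | nil => simp
  | cons r S ih =>
    have hs0 : List.Pairwise (· ≥ ·) (r.length :: S.map List.length) := by simpa using hs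
    have hs' : (S.map List.length).Pairwise (· ≥ ·) := (List.pairwise_cons.mp hs0).2
    have hhead : ∀ x ∈ S.map List.length, x ≤ r.length := (List.pairwise_cons.mp hs0).1
    by_cases hj : j < r.length
    · have hget : r[j]? = some (r.getD j 0) := by
        rw [List.getElem?_eq_getElem hj, List.getD_eq_getElem _ _ hj]
      rw [List.map_cons, List.countP_cons, if_pos (show decide (j < r.length) = true by simpa using hj)]
      rw [List.filterMap_cons_some (f := fun row => row[j]?) (a := r) (l := S)
        (b := r.getD j 0) hget, ih hs']
      rw [List.take_succ_cons, List.map_cons]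
    · have hall : ∀ row ∈ r :: S, row[j]? = none := by
        intro row hrow
        apply List.getElem?_eq_none
        rcases List.mem_cons.mp hrow with h | h
        · subst h; omega
        · have := hhead row.length (List.mem_map_of_mem h)
          omega
      rw [List.filterMap_eq_nil_iff.mpr hall]
      have hcnt : (List.map List.length (r :: S)).countP (fun x => decide (j < x)) = 0 := by
        rw [List.countP_eq_zero]
        intro x hx
        simp only [decide_eq_true_eq]
        rcases List.mem_cons.mp hx with h | h
        · omega
        · have := hhead x h; omega
      rw [hcnt]
      simp

lemma lt_length_of_lt_countP (S : List (List ℕ)) (hs : (S.map List.length).Pairwise (· ≥ ·)) :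
    ∀ j i, i < (S.map List.length).countP (fun x => decide (j < x)) →
      j < (S.getD i []).length := by
  induction S with
  | nil => simp
  | cons r S ih =>
    intro j i hi
    have hs0 : List.Pairwise (· ≥ ·) (r.length :: S.map List.length) := by simpa using hs
    have hs' : (S.map List.length).Pairwise (· ≥ ·) := (List.pairwise_cons.mp hs0).2
    have hhead : ∀ x ∈ S.map List.length, x ≤ r.length := (List.pairwise_cons.mp hs0).1
    by_cases hj : j < r.length
    · cases i with
      | zero => simpa using hj
      | succ i =>
        rw [List.map_cons, List.countP_cons,
          if_pos (show decide (j < r.length) = true by simpa using hj)] at hi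
        have := ih hs' j i (by omega)
        simpa using this
    · exfalso
      have hcnt : (List.map List.length (r :: S)).countP (fun x => decide (j < x)) = 0 := by
        rw [List.countP_eq_zero]
        intro x hx
        simp only [decide_eq_true_eq]
        rcases List.mem_cons.mp hx with h | h
        · omega
        · have := hhead x h; omega
      omega

lemma sorted_lt_of_adjacent (l : List ℕ) (h : ∀ i, i + 1 < l.length → l.getD i 0 < l.getD (i+1) 0) :
    l.Pairwise (· < ·) := by
  rw [List.pairwise_iff_getElem]
  intro i j hi hj hij
  have key : ∀ k, i + k + 1 ≤ j → l.getD i 0 < l.getD (i + k + 1) 0 := by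
    intro k
    induction k with
    | zero => intro hk; exact h i (by omega)
    | succ k ihk =>
      intro hk
      exact lt_trans (ihk (by omega)) (h (i + k + 1) (by omega))
  have hj' : i + (j - i - 1) + 1 = j := by omega
  have := key (j - i - 1) (by omega)
  rw [hj'] at this
  rwa [List.getD_eq_getElem _ _ hi, List.getD_eq_getElem _ _ hj] at this

lemma qAppend_eq (cs : List (List ℕ)) : ∀ n,
    qAppend n cs = (List.range cs.length).map
      (fun j => List.range' (n + ((cs.map List.length).take j).sum) (cs.getD j []).length) := by
  induction cs with
  | nil => intro n; rfl
  | cons c ts ih =>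
    intro n
    rw [show qAppend n (c :: ts) = List.range' n c.length :: qAppend (n + c.length) ts from rfl]
    rw [List.length_cons, List.range_succ_eq_map, List.map_cons, List.map_map]
    refine congrArg₂ List.cons ?_ ?_
    · simp
    · rw [ih (n + c.length)]
      apply List.map_congr_left
      intro j _
      simp only [Function.comp_apply, Nat.succ_eq_add_one, List.map_cons, List.take_succ_cons,
        List.sum_cons, List.getD_cons_succ]
      congr 1
      omega


end RSKAux

open RSKPaper in
/-- The recording tableau of the column reading word of any SYT of shape `λ`
is the fixed tableau `Q_λ`, whose columns are filled consecutively with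
`1,2,…,n` from bottom to top, left to right. -/
theorem recording_of_columnWord (S : List (List ℕ)) (lam : List ℕ)
    (hS : IsSYT S) (hshape : shape S = lam) :
    (RSK (columnWord S)).2 = Qlam lam := by
  subst hshape
  obtain ⟨⟨hsorted, hpos⟩, hrow, hcolcond, -⟩ := hS
  have hsorted' : (S.map List.length).Pairwise (· ≥ ·) := hsorted
  set m := (S.headD []).length with hm
  set cnt : ℕ → ℕ := fun j => (S.map List.length).countP (fun x => decide (j < x)) with hcntdef
  set col : ℕ → List ℕ := fun j => S.filterMap (fun row => row[j]?) with hcoldef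
  have hchar : ∀ j, col j = (S.take (cnt j)).map (fun r => r.getD j 0) :=
    fun j => RSKAux.filterMap_get_sorted S hsorted' j
  have hcntle : ∀ j, cnt j ≤ S.length :=
    fun j => le_trans List.countP_le_length (by simp)
  have hlen : ∀ j, (col j).length = cnt j := by
    intro j
    rw [hchar j, List.length_map, List.length_take]
    exact min_eq_left (hcntle j)
  have hget : ∀ j i, i < cnt j → (col j).getD i 0 = (S.getD i []).getD j 0 := by
    intro j i hi
    have hi2 : i < (col j).length := by rw [hlen]; exact hi
    rw [hchar j] at hi2
    have hiS : i < S.length := lt_of_lt_of_le hi (hcntle j)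
    rw [hchar j, List.getD_eq_getElem _ _ hi2, List.getElem_map, List.getElem_take,
      ← List.getD_eq_getElem S _ hiS]
  have hjlt : ∀ j i, i < cnt j → j < (S.getD i []).length :=
    fun j i hi => RSKAux.lt_length_of_lt_countP S hsorted' j i hi
  have hsortcol : ∀ j, (col j).Pairwise (· < ·) := by
    intro j
    apply RSKAux.sorted_lt_of_adjacent
    intro i hi1
    rw [hlen] at hi1
    rw [hget j i (by omega), hget j (i+1) hi1]
    exact hcolcond i j (by have := hcntle j; omega) (hjlt j (i+1) hi1)
  have hcntmono : ∀ a b, a ≤ b → cnt b ≤ cnt a := by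
    intro a b hab
    apply List.countP_mono_left
    intro x _ hx
    simp only [decide_eq_true_eq] at hx ⊢
    omega
  set cols := (List.range m).map col with hcolsdef
  have hpairR : List.Pairwise RSKAux.Rcol cols := by
    rw [hcolsdef, List.pairwise_map, List.pairwise_iff_getElem]
    intro a b ha hb hab
    simp only [List.getElem_range]
    simp only [List.length_range] at ha hb
    constructor
    · rw [hlen, hlen]
      exact hcntmono a b (le_of_lt hab)
    · intro t ht
      rw [hlen] at ht
      have hta : t < cnt a := lt_of_lt_of_le ht (hcntmono a b (le_of_lt hab))
      rw [hget a t hta, hget b t ht]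
      have htS : t < S.length := lt_of_lt_of_le ht (hcntle b)
      have hrowmem : S.getD t [] ∈ S := by
        rw [List.getD_eq_getElem _ _ htS]; exact List.getElem_mem _
      have hsrow := hrow _ hrowmem
      have hblen : b < (S.getD t []).length := hjlt b t ht
      have := (List.pairwise_iff_getElem.mp hsrow) a b (by omega) hblen hab
      rwa [← List.getD_eq_getElem, ← List.getD_eq_getElem] at this
  have hword : columnWord S = cols.flatMap List.reverse := by
    rw [columnWord, hcolsdef, List.flatMap_map]
    congr 1
    funext j
    rw [hcoldef]
    exact List.filterMap_reverse.symm ▸ rfl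
  have hsortcols : ∀ c ∈ ([] : List (List ℕ)) ++ cols, c.Pairwise (· < ·) := by
    intro c hc
    rw [List.nil_append, hcolsdef] at hc
    obtain ⟨j, -, rfl⟩ := List.mem_map.mp hc
    exact hsortcol j
  have houter := RSKAux.outer cols [] [] 1 hsortcols (by simpa using hpairR) rfl
  simp only [List.nil_append] at houter
  have h0 : RSKAux.stackRows ([] : List (List ℕ)) = [] := by
    simp [RSKAux.stackRows, rowsOfCols]
  have hRSK : (RSK (columnWord S)).2 = RSKAux.stackRows (RSKAux.qAppend 1 cols) := by
    rw [RSK, hword, show (([], []) : List (List ℕ) × List (List ℕ)) =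
      (RSKAux.stackRows [], RSKAux.stackRows []) by rw [h0], houter]
  rw [hRSK]
  have hmapc : cols.map List.length = conj (shape S) := by
    rw [conj]
    have hhead : (shape S).headD 0 = m := by
      rw [hm]; cases S <;> rfl
    rw [hhead, hcolsdef, List.map_map]
    apply List.map_congr_left
    intro j _
    simp only [Function.comp_apply]
    exact hlen j
  have hq : RSKAux.qAppend 1 cols = (List.range (conj (shape S)).length).map
      (fun j => (List.range ((conj (shape S)).getD j 0)).map
        (fun i => ((conj (shape S)).take j).sum + i + 1)) := by
    rw [RSKAux.qAppend_eq, ← hmapc]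
    simp only [List.length_map, List.length_range]
    apply List.map_congr_left
    intro j hj
    rw [List.mem_range] at hj
    have h1 : ((cols.map List.length).getD j 0) = (cols.getD j []).length := by
      rw [List.getD_eq_getElem _ _ (by simpa using hj), List.getElem_map,
        ← List.getD_eq_getElem]
    rw [h1, List.range'_eq_map_range]
    apply List.map_congr_left
    intro i _
    omega
  rw [hq, Qlam]
  rw [show RSKAux.stackRows ((List.range (conj (shape S)).length).map
      (fun j => (List.range ((conj (shape S)).getD j 0)).map
        (fun i => ((conj (shape S)).take j).sum + i + 1))) =
      rowsOfCols ((List.range (conj (shape S)).length).map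
      (fun j => (List.range ((conj (shape S)).getD j 0)).map
        (fun i => ((conj (shape S)).take j).sum + i + 1)))
      (((List.range (conj (shape S)).length).map
      (fun j => (List.range ((conj (shape S)).getD j 0)).map
        (fun i => ((conj (shape S)).take j).sum + i + 1))).headD []).length from rfl]
  congr 1
  -- remaining: head length = (shape S).length
  by_cases hS0 : S = []
  · subst hS0
    simp [conj, shape]
  · have hm0 : 0 < m := by
      have hmem : (S.headD []).length ∈ shape S := by
        cases S with
        | nil => exact absurd rfl hS0
        | cons r0 S' => simp [shape]
      exact hpos _ hmem
    have hclen : (conj (shape S)).length = m := by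
      rw [conj, List.length_map, List.length_range]
      cases S <;> rfl
    have hX : ((List.range (conj (shape S)).length).map
        (fun j => (List.range ((conj (shape S)).getD j 0)).map
          (fun i => ((conj (shape S)).take j).sum + i + 1))).headD [] =
        (List.range ((conj (shape S)).getD 0 0)).map
          (fun i => ((conj (shape S)).take 0).sum + i + 1) := by
      rw [hclen]
      cases hmm : m with
      | zero => omega
      | succ m' => rw [List.range_succ_eq_map, List.map_cons]; rfl
    rw [hX, List.length_map, List.length_range]
    have hc0 : (conj (shape S)).getD 0 0 = cnt 0 := by
      have h0m : 0 < cols.length := by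
        rw [hcolsdef, List.length_map, List.length_range]; exact hm0
      have h0m' : 0 < (cols.map List.length).length := by simpa using h0m
      rw [← hmapc, List.getD_eq_getElem _ _ h0m', List.getElem_map,
        ← List.getD_eq_getElem _ _ h0m]
      have hcols0 : cols.getD 0 [] = col 0 := by
        rw [hcolsdef, List.getD_eq_getElem _ _ (by simpa using hm0),
          List.getElem_map, List.getElem_range]
      rw [hcols0]
      exact hlen 0
    rw [hc0]
    have : cnt 0 = (S.map List.length).length := by
      rw [hcntdef]
      apply List.countP_eq_length.mpr
      intro x hx
      simp only [decide_eq_true_eq]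
      exact hpos x hx
    rw [this, List.length_map]
    simp [shape]
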